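/- If (u_A, w_A) is optimal for the dual LP of the learning-from-demonstrations problem, then any apprentice policy π_A (optimal for the minimax LfD problem) is optimal for the forward RL problem with cost c_{w_A}, and u_A = V*_{w_A} (ν₀-almost surely). -/

import Mathlib

open Finset

variable {X A : Type*} [Fintype X] [Fintype A] [DecidableEq X] [DecidableEq A]
  [Nonempty X] [Nonempty A]

/-- A finite discounted Markov decision process. -/
structure FinMDP (X A : Type*) [Fintype X] [Fintype A] where
  P : X → A → X → ℝ
  P_nonneg : ∀ x a x', 0 ≤ P x a x'
  P_sum : ∀ x a, ∑ x', P x a x' = 1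
  ν : X → ℝ
  ν_nonneg : ∀ x, 0 ≤ ν x
  ν_sum : ∑ x, ν x = 1
  γ : ℝ
  γ_pos : 0 < γ
  γ_lt_one : γ < 1

/-- A stationary Markov policy. -/
def FinMDP.IsPolicy (π : X → A → ℝ) : Prop :=
  (∀ x a, 0 ≤ π x a) ∧ ∀ x, ∑ a, π x a = 1

namespace FinMDP

variable (M : FinMDP X A)

/-- The state-action distribution at time `t` of policy `π` started from `ν'`. -/
noncomputable def saDist (ν' : X → ℝ) (π : X → A → ℝ) : ℕ → X × A → ℝ
  | 0 => fun p => ν' p.1 * π p.1 p.2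
  | t + 1 => fun p => (∑ q : X × A, saDist ν' π t q * M.P q.1 q.2 p.1) * π p.1 p.2

/-- The normalized discounted occupancy measure of `π` started from `ν'`. -/
noncomputable def occFrom (ν' : X → ℝ) (π : X → A → ℝ) (p : X × A) : ℝ :=
  (1 - M.γ) * ∑' t : ℕ, M.γ ^ t * M.saDist ν' π t p

/-- The normalized discounted occupancy measure of `π` (from the initial distribution). -/
noncomputable def occ (π : X → A → ℝ) : X × A → ℝ :=
  M.occFrom M.ν π

/-- The (normalized) value function of policy `π` for cost `c`. -/
noncomputable def value (c : X × A → ℝ) (π : X → A → ℝ) (x : X) : ℝ :=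
  ∑ p : X × A, M.occFrom (fun y => if y = x then 1 else 0) π p * c p

/-- The total expected (normalized) discounted cost `ρ_c(π) = ⟨μ_π, c⟩`. -/
noncomputable def cost (c : X × A → ℝ) (π : X → A → ℝ) : ℝ :=
  ∑ p : X × A, M.occ π p * c p

/-- The Bellman flow operator `T_γ μ = (1/(1-γ)) (B - γ P)ᵀ μ`. -/
noncomputable def Tflow (μ : X × A → ℝ) (x' : X) : ℝ :=
  (1 / (1 - M.γ)) * ((∑ a, μ (x', a)) - M.γ * ∑ p : X × A, μ p * M.P p.1 p.2 x')

/-- The adjoint operator `T*_γ u = (1/(1-γ)) (B - γ P) u`. -/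
noncomputable def Tadj (u : X → ℝ) (p : X × A) : ℝ :=
  (1 / (1 - M.γ)) * (u p.1 - M.γ * ∑ x', M.P p.1 p.2 x' * u x')

/-- `π` is an optimal policy for the forward RL problem with cost `c`. -/
def IsOptimal (c : X × A → ℝ) (π : X → A → ℝ) : Prop :=
  IsPolicy π ∧ ∀ π', IsPolicy π' → M.cost c π ≤ M.cost c π'

/-- The optimal value function `V*_c(x) = min_π V_c^π(x)`. -/
noncomputable def Vstar (c : X × A → ℝ) (x : X) : ℝ :=
  sInf {v | ∃ π, IsPolicy π ∧ v = M.value c π x}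

end FinMDP

/-- The policy induced by a state-action distribution:
`π_μ(a|x) = μ(x,a) / ∑_{a'} μ(x,a')` (uniform on zero-mass states). -/
noncomputable def inducedPolicy (μ : X × A → ℝ) (x : X) (a : A) : ℝ :=
  if (∑ a' : A, μ (x, a')) = 0 then (1 : ℝ) / (Fintype.card A)
  else μ (x, a) / ∑ a' : A, μ (x, a')

/-- `μ` is a probability distribution on state-action pairs. -/
def IsDist (μ : X × A → ℝ) : Prop := (∀ p, 0 ≤ μ p) ∧ ∑ p : X × A, μ p = 1

/-- Membership in the probability simplex `Δ_{[n]}`. -/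
def simplexPt {n : ℕ} (w : Fin n → ℝ) : Prop := (∀ i, 0 ≤ w i) ∧ ∑ i, w i = 1

/-- The `ℓ¹` norm of a finitely supported vector. -/
noncomputable def l1 {ι : Type*} [Fintype ι] (f : ι → ℝ) : ℝ := ∑ i, |f i|

/-- The `ℓ∞` norm of a finitely supported vector. -/
noncomputable def linf {ι : Type*} [Fintype ι] [Nonempty ι] (f : ι → ℝ) : ℝ :=
  Finset.univ.sup' Finset.univ_nonempty fun i => |f i|

/-- The cost `c_w = ∑ᵢ wᵢ cᵢ` parameterized by weights `w`. -/
noncomputable def costW {nc : ℕ} (c : Fin nc → X × A → ℝ) (w : Fin nc → ℝ) :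
    X × A → ℝ :=
  fun p => ∑ i, w i * c i p

/-- The objective of the dual LP `(D_{π_E})`. -/
noncomputable def dualObj {nc : ℕ} (M : FinMDP X A) (c : Fin nc → X × A → ℝ)
    (πE : X → A → ℝ) (u : X → ℝ) (w : Fin nc → ℝ) : ℝ :=
  ∑ p : X × A, M.occ πE p * (M.Tadj u p - costW c w p)

/-- Feasibility for the dual LP `(D_{π_E})`. -/
def dualFeasible {nc : ℕ} (M : FinMDP X A) (c : Fin nc → X × A → ℝ)
    (u : X → ℝ) (w : Fin nc → ℝ) : Prop :=
  simplexPt w ∧ ∀ p, 0 ≤ costW c w p - M.Tadj u p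

/-- Optimality for the dual LP `(D_{π_E})`. -/
def dualOptimal {nc : ℕ} (M : FinMDP X A) (c : Fin nc → X × A → ℝ)
    (πE : X → A → ℝ) (u : X → ℝ) (w : Fin nc → ℝ) : Prop :=
  dualFeasible M c u w ∧
    ∀ u' w', dualFeasible M c u' w' → dualObj M c πE u' w' ≤ dualObj M c πE u w

/-- The `C`-distance `δ_C(π, π_E) = max_i (ρ_{c_i}(π) - ρ_{c_i}(π_E))`. -/
noncomputable def gapMax {nc : ℕ} [NeZero nc] (M : FinMDP X A)
    (c : Fin nc → X × A → ℝ) (πE π : X → A → ℝ) : ℝ :=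
  haveI : Nonempty (Fin nc) := ⟨⟨0, Nat.pos_of_ne_zero (NeZero.ne nc)⟩⟩
  Finset.univ.sup' Finset.univ_nonempty fun i => M.cost (c i) π - M.cost (c i) πE

/-- `π_A` is an apprentice policy: it minimizes `δ_C(·, π_E)` over stationary policies. -/
def IsApprentice {nc : ℕ} [NeZero nc] (M : FinMDP X A)
    (c : Fin nc → X × A → ℝ) (πE πA : X → A → ℝ) : Prop :=
  FinMDP.IsPolicy πA ∧
    ∀ π, FinMDP.IsPolicy π → gapMax M c πE πA ≤ gapMax M c πE π

/-- The parameter set `Λ = {λ : ‖λ‖₂ ≤ β/√n_u}`. -/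
def lamSet (nu : ℕ) (β : ℝ) : Set (Fin nu → ℝ) :=
  {l | Real.sqrt (∑ k, l k ^ 2) ≤ β / Real.sqrt nu}

/-- The reduced Lagrangian `L_r(θ, λ, w) = ⟨μ_θ - μ_{π_E}, c_w - T*_γ u_λ⟩`. -/
noncomputable def Lr {nm nu nc : ℕ} (M : FinMDP X A)
    (Φ : Fin nm → X × A → ℝ) (Ψ : Fin nu → X → ℝ) (c : Fin nc → X × A → ℝ)
    (πE : X → A → ℝ) (θ : Fin nm → ℝ) (lam : Fin nu → ℝ) (w : Fin nc → ℝ) : ℝ :=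
  ∑ p : X × A, ((∑ i, θ i * Φ i p) - M.occ πE p) *
    ((∑ j, w j * c j p) - M.Tadj (fun x => ∑ k, lam k * Ψ k x) p)

/-- The saddle-point residual of a point `(θ, λ, w)` for the reduced Lagrangian. -/
noncomputable def epsSad {nm nu nc : ℕ} (M : FinMDP X A)
    (Φ : Fin nm → X × A → ℝ) (Ψ : Fin nu → X → ℝ) (c : Fin nc → X × A → ℝ)
    (πE : X → A → ℝ) (β : ℝ)
    (θ : Fin nm → ℝ) (lam : Fin nu → ℝ) (w : Fin nc → ℝ) : ℝ :=
  sSup {v | ∃ lam' ∈ lamSet nu β, ∃ w', simplexPt w' ∧ v = Lr M Φ Ψ c πE θ lam' w'} -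
    sInf {v | ∃ θ', simplexPt θ' ∧ v = Lr M Φ Ψ c πE θ' lam w}


set_option linter.unusedSectionVars false
set_option linter.unusedVariables false
set_option maxHeartbeats 1000000

namespace FinMDP
variable (M : FinMDP X A)

variable {ν' : X → ℝ} {π : X → A → ℝ}

lemma saDist_nonneg (hν' : ∀ x, 0 ≤ ν' x) (hπ : ∀ x a, 0 ≤ π x a) (t : ℕ) (p : X × A) :
    0 ≤ M.saDist ν' π t p := by
  induction t generalizing p with
  | zero => exact mul_nonneg (hν' _) (hπ _ _)
  | succ t ih =>
    exact mul_nonneg (Finset.sum_nonneg fun q _ => mul_nonneg (ih q) (M.P_nonneg _ _ _)) (hπ _ _)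

lemma saDist_sum (hπ1 : ∀ x, ∑ a, π x a = 1) (t : ℕ) :
    ∑ p : X × A, M.saDist ν' π t p = ∑ x, ν' x := by
  induction t with
  | zero =>
    rw [Fintype.sum_prod_type]
    simp [saDist, ← Finset.mul_sum, hπ1]
  | succ t ih =>
    rw [Fintype.sum_prod_type]
    have : ∀ x : X, ∑ a, M.saDist ν' π (t+1) (x, a)
        = ∑ q : X × A, M.saDist ν' π t q * M.P q.1 q.2 x := by
      intro x
      simp only [saDist, ← Finset.mul_sum, hπ1, mul_one]
    rw [Finset.sum_congr rfl fun x _ => this x, Finset.sum_comm]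
    simp only [← Finset.mul_sum, M.P_sum, mul_one]
    exact ih

lemma saDist_le_one (hν' : ∀ x, 0 ≤ ν' x) (hν1 : ∑ x, ν' x = 1)
    (hπ : IsPolicy π) (t : ℕ) (p : X × A) : M.saDist ν' π t p ≤ 1 := by
  have h := M.saDist_sum (π := π) (ν' := ν') hπ.2 t
  calc M.saDist ν' π t p ≤ ∑ p : X × A, M.saDist ν' π t p :=
        Finset.single_le_sum (fun q _ => M.saDist_nonneg hν' hπ.1 t q) (Finset.mem_univ p)
    _ = 1 := by rw [h, hν1]

lemma summable_aux (hν' : ∀ x, 0 ≤ ν' x) (hν1 : ∑ x, ν' x = 1) (hπ : IsPolicy π) (p : X × A) :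
    Summable (fun t : ℕ => M.γ ^ t * M.saDist ν' π t p) := by
  apply Summable.of_nonneg_of_le
    (fun t => mul_nonneg (pow_nonneg M.γ_pos.le t) (M.saDist_nonneg hν' hπ.1 t p))
    (fun t => ?_) (summable_geometric_of_lt_one M.γ_pos.le M.γ_lt_one)
  calc M.γ ^ t * M.saDist ν' π t p ≤ M.γ ^ t * 1 :=
        mul_le_mul_of_nonneg_left (M.saDist_le_one hν' hν1 hπ t p) (pow_nonneg M.γ_pos.le t)
    _ = M.γ ^ t := mul_one _

lemma occFrom_nonneg (hν' : ∀ x, 0 ≤ ν' x) (hπ : ∀ x a, 0 ≤ π x a) (p : X × A) :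
    0 ≤ M.occFrom ν' π p :=
  mul_nonneg (by linarith [M.γ_lt_one]) (tsum_nonneg fun t =>
    mul_nonneg (pow_nonneg M.γ_pos.le t) (M.saDist_nonneg hν' hπ t p))

-- ## chunk 2

/-- Dirac distribution. -/
def delta (x : X) : X → ℝ := fun y => if y = x then 1 else 0

lemma delta_nonneg (x y : X) : 0 ≤ delta x y := by unfold delta; positivity

lemma delta_sum (x : X) : ∑ y, delta x y = 1 := by simp [delta]

/-- One-step state distribution. -/
noncomputable def stepDist (π : X → A → ℝ) (ν' : X → ℝ) (x' : X) : ℝ :=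
  ∑ q : X × A, ν' q.1 * π q.1 q.2 * M.P q.1 q.2 x'

lemma stepDist_nonneg (hν' : ∀ x, 0 ≤ ν' x) (hπ : ∀ x a, 0 ≤ π x a) (x' : X) :
    0 ≤ M.stepDist π ν' x' :=
  Finset.sum_nonneg fun q _ => mul_nonneg (mul_nonneg (hν' _) (hπ _ _)) (M.P_nonneg _ _ _)

lemma stepDist_sum (hπ1 : ∀ x, ∑ a, π x a = 1) :
    ∑ x', M.stepDist π ν' x' = ∑ x, ν' x := by
  unfold stepDist
  rw [Finset.sum_comm]
  simp only [← Finset.mul_sum, M.P_sum, mul_one, Fintype.sum_prod_type, hπ1]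

lemma saDist_step (t : ℕ) :
    M.saDist ν' π (t + 1) = M.saDist (M.stepDist π ν') π t := by
  induction t with
  | zero =>
    funext p
    show (∑ q : X × A, M.saDist ν' π 0 q * M.P q.1 q.2 p.1) * π p.1 p.2 = _
    simp only [saDist, stepDist]
  | succ t ih =>
    funext p
    show (∑ q : X × A, M.saDist ν' π (t+1) q * M.P q.1 q.2 p.1) * π p.1 p.2 = _
    rw [ih]; rfl

lemma occFrom_succ (hν' : ∀ x, 0 ≤ ν' x) (hν1 : ∑ x, ν' x = 1) (hπ : IsPolicy π) (p : X × A) :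
    M.occFrom ν' π p = (1 - M.γ) * (ν' p.1 * π p.1 p.2)
      + M.γ * M.occFrom (M.stepDist π ν') π p := by
  have hsum := M.summable_aux hν' hν1 hπ p
  unfold occFrom
  rw [Summable.tsum_eq_zero_add hsum]
  have : ∀ t : ℕ, M.γ ^ (t+1) * M.saDist ν' π (t+1) p
      = M.γ * (M.γ ^ t * M.saDist (M.stepDist π ν') π t p) := by
    intro t; rw [M.saDist_step]; ring
  rw [tsum_congr this, tsum_mul_left]
  show (1 - M.γ) * (M.γ ^ 0 * (ν' p.1 * π p.1 p.2) + _) = _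
  ring

lemma saDist_lin (t : ℕ) (p : X × A) :
    M.saDist ν' π t p = ∑ x, ν' x * M.saDist (delta x) π t p := by
  induction t generalizing p with
  | zero =>
    show ν' p.1 * π p.1 p.2 = ∑ x, ν' x * (delta x p.1 * π p.1 p.2)
    simp only [delta, mul_ite, mul_one, mul_zero, ite_mul, zero_mul]
    simp
  | succ t ih =>
    show (∑ q : X × A, M.saDist ν' π t q * M.P q.1 q.2 p.1) * π p.1 p.2 = _
    have key : (∑ q : X × A, M.saDist ν' π t q * M.P q.1 q.2 p.1)
        = ∑ x, ν' x * ∑ q : X × A, M.saDist (delta x) π t q * M.P q.1 q.2 p.1 := by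
      have h1 : (∑ q : X × A, M.saDist ν' π t q * M.P q.1 q.2 p.1)
          = ∑ q : X × A, ∑ x, ν' x * M.saDist (delta x) π t q * M.P q.1 q.2 p.1 := by
        refine Finset.sum_congr rfl fun q _ => ?_
        rw [ih q, Finset.sum_mul]
      rw [h1, Finset.sum_comm]
      refine Finset.sum_congr rfl fun x _ => ?_
      rw [Finset.mul_sum]
      refine Finset.sum_congr rfl fun q _ => by ring
    rw [key, Finset.sum_mul]
    refine Finset.sum_congr rfl fun x _ => ?_
    show _ = ν' x * ((∑ q : X × A, M.saDist (delta x) π t q * M.P q.1 q.2 p.1) * π p.1 p.2)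
    ring

lemma occFrom_lin (hπ : IsPolicy π) (p : X × A) :
    M.occFrom ν' π p = ∑ x, ν' x * M.occFrom (delta x) π p := by
  unfold occFrom
  have h1 : ∀ t : ℕ, M.γ ^ t * M.saDist ν' π t p
      = ∑ x, ν' x * (M.γ ^ t * M.saDist (delta x) π t p) := by
    intro t
    rw [M.saDist_lin t p, Finset.mul_sum]
    exact Finset.sum_congr rfl fun x _ => by ring
  rw [tsum_congr h1, Summable.tsum_finsetSum (fun x _ => Summable.mul_left _
    (M.summable_aux (delta_nonneg x) (delta_sum x) hπ p))]
  rw [Finset.mul_sum]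
  exact Finset.sum_congr rfl fun x _ => by rw [tsum_mul_left]; ring

-- ## chunk 3

lemma γ_ne : (1 : ℝ) - M.γ ≠ 0 := by linarith [M.γ_lt_one]

lemma occFrom_flow (hν' : ∀ x, 0 ≤ ν' x) (hν1 : ∑ x, ν' x = 1) (hπ : IsPolicy π) (x : X) :
    (∑ a, M.occFrom ν' π (x, a)) - M.γ * ∑ p : X × A, M.occFrom ν' π p * M.P p.1 p.2 x
      = (1 - M.γ) * ν' x := by
  classical
  set σ : ℕ → ℝ := fun t => ∑ a, M.saDist ν' π t (x, a) with hσ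
  have hsum : ∀ p, Summable (fun t : ℕ => M.γ ^ t * M.saDist ν' π t p) :=
    M.summable_aux hν' hν1 hπ
  have hσsum : Summable (fun t => M.γ ^ t * σ t) := by
    have : ∀ t, M.γ ^ t * σ t = ∑ a, M.γ ^ t * M.saDist ν' π t (x, a) := fun t => by
      rw [hσ, Finset.mul_sum]
    rw [show (fun t => M.γ ^ t * σ t) = fun t => ∑ a, M.γ ^ t * M.saDist ν' π t (x, a) from
      funext this]
    exact summable_sum fun a _ => hsum (x, a)
  have A1 : (∑ a, M.occFrom ν' π (x, a)) = (1 - M.γ) * ∑' t, M.γ ^ t * σ t := by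
    unfold occFrom
    rw [← Finset.mul_sum]
    congr 1
    rw [← Summable.tsum_finsetSum (fun a _ => hsum (x, a))]
    exact tsum_congr fun t => by rw [hσ, Finset.mul_sum]
  have hσsucc : ∀ t, σ (t + 1) = ∑ p : X × A, M.saDist ν' π t p * M.P p.1 p.2 x := by
    intro t
    show (∑ a, (∑ q : X × A, M.saDist ν' π t q * M.P q.1 q.2 x) * π x a) = _
    rw [← Finset.mul_sum, hπ.2, mul_one]
  have A2 : ∑ p : X × A, M.occFrom ν' π p * M.P p.1 p.2 x
      = (1 - M.γ) * ∑' t, M.γ ^ t * σ (t + 1) := by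
    unfold occFrom
    calc ∑ p : X × A, ((1 - M.γ) * ∑' t, M.γ ^ t * M.saDist ν' π t p) * M.P p.1 p.2 x
        = (1 - M.γ) * ∑ p : X × A, ∑' t, (M.γ ^ t * M.saDist ν' π t p) * M.P p.1 p.2 x := by
          rw [Finset.mul_sum]
          refine Finset.sum_congr rfl fun p _ => ?_
          rw [tsum_mul_right]; ring
      _ = (1 - M.γ) * ∑' t, ∑ p : X × A, (M.γ ^ t * M.saDist ν' π t p) * M.P p.1 p.2 x := by
          rw [← Summable.tsum_finsetSum (fun p _ => (hsum p).mul_right _)]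
      _ = (1 - M.γ) * ∑' t, M.γ ^ t * σ (t + 1) := by
          congr 1
          refine tsum_congr fun t => ?_
          rw [hσsucc t, Finset.mul_sum]
          exact Finset.sum_congr rfl fun p _ => by ring
  have key : (∑' t, M.γ ^ t * σ t) - M.γ * ∑' t, M.γ ^ t * σ (t + 1) = σ 0 := by
    have h := Summable.tsum_eq_zero_add hσsum
    have h2 : ∑' t : ℕ, M.γ ^ (t + 1) * σ (t + 1) = M.γ * ∑' t : ℕ, M.γ ^ t * σ (t + 1) := by
      rw [← tsum_mul_left]; exact tsum_congr fun t => by ring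
    rw [h2, pow_zero, one_mul] at h
    linarith
  have hσ0 : σ 0 = ν' x := by
    show (∑ a, ν' x * π x a) = ν' x
    rw [← Finset.mul_sum, hπ.2, mul_one]
  rw [A1, A2]
  rw [hσ0] at key
  linear_combination (1 - M.γ) * key

lemma occFrom_dot_Tadj (hν' : ∀ x, 0 ≤ ν' x) (hν1 : ∑ x, ν' x = 1) (hπ : IsPolicy π)
    (u : X → ℝ) :
    ∑ p : X × A, M.occFrom ν' π p * M.Tadj u p = ∑ x, ν' x * u x := by
  have hγ := M.γ_ne
  set μ := M.occFrom ν' π with hμ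
  have h1 : ∀ p : X × A, μ p * M.Tadj u p
      = (1/(1-M.γ)) * (μ p * u p.1)
        - (1/(1-M.γ)) * M.γ * ∑ x', μ p * (M.P p.1 p.2 x' * u x') := by
    intro p
    unfold Tadj
    rw [← Finset.mul_sum]
    ring
  rw [Finset.sum_congr rfl fun p _ => h1 p, Finset.sum_sub_distrib, ← Finset.mul_sum,
    ← Finset.mul_sum]
  have h2 : ∑ p : X × A, μ p * u p.1 = ∑ x, (∑ a, μ (x, a)) * u x := by
    rw [Fintype.sum_prod_type]
    exact Finset.sum_congr rfl fun x _ => by rw [Finset.sum_mul]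
  have h3 : ∑ p : X × A, ∑ x', μ p * (M.P p.1 p.2 x' * u x')
      = ∑ x', (∑ p : X × A, μ p * M.P p.1 p.2 x') * u x' := by
    rw [Finset.sum_comm]
    refine Finset.sum_congr rfl fun x' _ => ?_
    rw [Finset.sum_mul]
    exact Finset.sum_congr rfl fun p _ => by ring
  rw [h2, h3]
  have h4 : ∀ x, (∑ a, μ (x, a))
      = (1 - M.γ) * ν' x + M.γ * ∑ p : X × A, μ p * M.P p.1 p.2 x := by
    intro x
    have := M.occFrom_flow hν' hν1 hπ x
    linarith
  rw [Finset.mul_sum, Finset.mul_sum, ← Finset.sum_sub_distrib]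
  refine Finset.sum_congr rfl fun x _ => ?_
  rw [h4 x]
  field_simp
  ring

lemma value_def' (c : X × A → ℝ) (x : X) :
    M.value c π x = ∑ p : X × A, M.occFrom (delta x) π p * c p := rfl

lemma cost_eq (hπ : IsPolicy π) (c : X × A → ℝ) :
    M.cost c π = ∑ x, M.ν x * M.value c π x := by
  unfold cost occ
  have h : ∀ p : X × A, M.occFrom M.ν π p * c p
      = ∑ x, M.ν x * (M.occFrom (delta x) π p * c p) := by
    intro p
    rw [M.occFrom_lin hπ p, Finset.sum_mul]
    exact Finset.sum_congr rfl fun x _ => by ring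
  rw [Finset.sum_congr rfl fun p _ => h p, Finset.sum_comm]
  refine Finset.sum_congr rfl fun x _ => ?_
  rw [value_def', Finset.mul_sum]

lemma le_value (hπ : IsPolicy π) {u : X → ℝ} {c : X × A → ℝ}
    (hf : ∀ p, M.Tadj u p ≤ c p) (x : X) : u x ≤ M.value c π x := by
  have hδ := M.occFrom_dot_Tadj (delta_nonneg x) (delta_sum x) hπ u
  have he : ∑ y, delta x y * u y = u x := by simp [delta]
  rw [he] at hδ
  rw [value_def', ← hδ]
  exact Finset.sum_le_sum fun p _ =>
    mul_le_mul_of_nonneg_left (hf p) (M.occFrom_nonneg (delta_nonneg x) hπ.1 p)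

lemma delta_prod_sum (x : X) (g : X → A → ℝ) :
    ∑ p : X × A, delta x p.1 * g p.1 p.2 = ∑ a, g x a := by
  rw [Fintype.sum_prod_type]
  have h : ∀ y, (∑ a, delta x y * g y a) = (if y = x then ∑ a, g x a else 0) := by
    intro y
    unfold delta
    by_cases hyx : y = x
    · subst hyx; simp
    · simp [hyx]
  rw [Finset.sum_congr rfl fun y _ => h y]
  simp

lemma value_bellman (hπ : IsPolicy π) (c : X × A → ℝ) (x : X) :
    M.value c π x = ∑ a, π x a *
      ((1 - M.γ) * c (x, a) + M.γ * ∑ x', M.P x a x' * M.value c π x') := by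
  have hstep : ∀ x', M.stepDist π (delta x) x' = ∑ a, π x a * M.P x a x' := by
    intro x'
    unfold stepDist
    rw [Finset.sum_congr rfl fun q (_ : q ∈ Finset.univ) =>
      mul_assoc (delta x q.1) (π q.1 q.2) (M.P q.1 q.2 x')]
    exact delta_prod_sum x fun y a => π y a * M.P y a x'
  have h1 : M.value c π x = (1 - M.γ) * ∑ a, π x a * c (x, a)
      + M.γ * ∑ p : X × A, M.occFrom (M.stepDist π (delta x)) π p * c p := by
    rw [value_def']
    have e : ∀ p : X × A, M.occFrom (delta x) π p * c p
        = (1 - M.γ) * (delta x p.1 * (π p.1 p.2 * c p))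
          + M.γ * (M.occFrom (M.stepDist π (delta x)) π p * c p) := by
      intro p
      rw [M.occFrom_succ (delta_nonneg x) (delta_sum x) hπ p]
      ring
    rw [Finset.sum_congr rfl fun p _ => e p, Finset.sum_add_distrib, ← Finset.mul_sum,
      ← Finset.mul_sum]
    congr 2
    exact delta_prod_sum x fun y a => π y a * c (y, a)
  have h2 : ∑ p : X × A, M.occFrom (M.stepDist π (delta x)) π p * c p
      = ∑ x', (∑ a, π x a * M.P x a x') * M.value c π x' := by
    have e2 : ∀ p : X × A, M.occFrom (M.stepDist π (delta x)) π p * c p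
        = ∑ x', M.stepDist π (delta x) x' * (M.occFrom (delta x') π p * c p) := by
      intro p
      rw [M.occFrom_lin hπ p, Finset.sum_mul]
      exact Finset.sum_congr rfl fun x' _ => by ring
    rw [Finset.sum_congr rfl fun p _ => e2 p, Finset.sum_comm]
    refine Finset.sum_congr rfl fun x' _ => ?_
    rw [← Finset.mul_sum, hstep x', value_def']
  have h3 : ∑ x', (∑ a, π x a * M.P x a x') * M.value c π x'
      = ∑ a, π x a * ∑ x', M.P x a x' * M.value c π x' := by
    have e3 : ∀ x', (∑ a, π x a * M.P x a x') * M.value c π x'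
        = ∑ a, π x a * (M.P x a x' * M.value c π x') := by
      intro x'
      rw [Finset.sum_mul]
      exact Finset.sum_congr rfl fun a _ => by ring
    rw [Finset.sum_congr rfl fun x' _ => e3 x', Finset.sum_comm]
    exact Finset.sum_congr rfl fun a _ => by rw [Finset.mul_sum]
  rw [h1, h2, h3, Finset.mul_sum, Finset.mul_sum, ← Finset.sum_add_distrib]
  exact Finset.sum_congr rfl fun a _ => by ring


-- ## chunk 4
noncomputable def Lop (c : X × A → ℝ) (v : X → ℝ) (x : X) : ℝ :=
  Finset.univ.inf' Finset.univ_nonempty fun a =>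
    (1 - M.γ) * c (x, a) + M.γ * ∑ x', M.P x a x' * v x'

lemma Lop_dist (c : X × A → ℝ) (v w : X → ℝ) {B : ℝ} (hB : 0 ≤ B)
    (h : ∀ x', |v x' - w x'| ≤ B) (x : X) :
    |M.Lop c v x - M.Lop c w x| ≤ M.γ * B := by
  set f : A → ℝ := fun a => (1 - M.γ) * c (x, a) + M.γ * ∑ x', M.P x a x' * v x' with hf
  set g : A → ℝ := fun a => (1 - M.γ) * c (x, a) + M.γ * ∑ x', M.P x a x' * w x' with hg
  have hfg : ∀ a, |f a - g a| ≤ M.γ * B := by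
    intro a
    have e : f a - g a = ∑ x', M.γ * (M.P x a x' * (v x' - w x')) := by
      rw [hf, hg]
      simp only
      rw [Finset.mul_sum, Finset.mul_sum]
      rw [show ∀ s1 s2 : ℝ, ((1-M.γ) * c (x,a) + s1) - ((1-M.γ) * c (x,a) + s2) = s1 - s2
        from fun _ _ => by ring]
      rw [← Finset.sum_sub_distrib]
      exact Finset.sum_congr rfl fun x' _ => by ring
    rw [e]
    calc |∑ x', M.γ * (M.P x a x' * (v x' - w x'))|
        ≤ ∑ x', |M.γ * (M.P x a x' * (v x' - w x'))| := Finset.abs_sum_le_sum_abs _ _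
      _ ≤ ∑ x', M.γ * (M.P x a x' * B) := by
          refine Finset.sum_le_sum fun x' _ => ?_
          rw [abs_mul, abs_of_pos M.γ_pos, abs_mul, abs_of_nonneg (M.P_nonneg x a x')]
          exact mul_le_mul_of_nonneg_left
            (mul_le_mul_of_nonneg_left (h x') (M.P_nonneg x a x')) M.γ_pos.le
      _ = M.γ * B := by
          rw [← Finset.mul_sum, ← Finset.sum_mul, M.P_sum, one_mul]
  obtain ⟨a1, -, ha1⟩ := Finset.exists_mem_eq_inf' (Finset.univ_nonempty (α := A)) f
  obtain ⟨a2, -, ha2⟩ := Finset.exists_mem_eq_inf' (Finset.univ_nonempty (α := A)) g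
  have h1 : M.Lop c v x = Finset.univ.inf' Finset.univ_nonempty f := rfl
  have h2 : M.Lop c w x = Finset.univ.inf' Finset.univ_nonempty g := rfl
  rw [abs_le]
  constructor
  · have l1 : Finset.univ.inf' Finset.univ_nonempty g ≤ g a1 :=
      Finset.inf'_le _ (Finset.mem_univ a1)
    have l2 : f a1 - g a1 ≥ -(M.γ * B) := neg_le_of_abs_le (hfg a1)
    rw [h1, h2, ha1]
    linarith
  · have l1 : Finset.univ.inf' Finset.univ_nonempty f ≤ f a2 :=
      Finset.inf'_le _ (Finset.mem_univ a2)
    have l2 : f a2 - g a2 ≤ M.γ * B := le_of_abs_le (hfg a2)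
    rw [h1, h2, ha2]
    linarith

lemma exists_fixed (c : X × A → ℝ) : ∃ u : X → ℝ, M.Lop c u = u := by
  have hK : (M.γ.toNNReal : ℝ) = M.γ := Real.coe_toNNReal _ M.γ_pos.le
  have hlip : LipschitzWith M.γ.toNNReal (M.Lop c) := by
    apply LipschitzWith.of_dist_le_mul
    intro v w
    rw [hK]
    rw [dist_pi_le_iff (mul_nonneg M.γ_pos.le dist_nonneg)]
    intro x
    rw [Real.dist_eq]
    exact M.Lop_dist c v w dist_nonneg (fun x' => by
      rw [← Real.dist_eq]; exact dist_le_pi_dist v w x') x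
  have hc : ContractingWith M.γ.toNNReal (M.Lop c) := by
    refine ⟨?_, hlip⟩
    rw [← NNReal.coe_lt_coe, hK]
    exact M.γ_lt_one
  exact ⟨hc.fixedPoint (M.Lop c), hc.fixedPoint_isFixedPt⟩

lemma bellman_unique (hπ : IsPolicy π) (c : X × A → ℝ) (v : X → ℝ)
    (hv : ∀ x, v x = ∑ a, π x a *
      ((1 - M.γ) * c (x, a) + M.γ * ∑ x', M.P x a x' * v x')) :
    v = M.value c π := by
  set D : ℝ := Finset.univ.sup' Finset.univ_nonempty fun x => |v x - M.value c π x| with hD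
  have hDge : ∀ x, |v x - M.value c π x| ≤ D := fun x =>
    Finset.le_sup' (fun y => |v y - M.value c π y|) (Finset.mem_univ x)
  have hD0 : 0 ≤ D := le_trans (abs_nonneg _) (hDge (Classical.arbitrary X))
  have key : ∀ x, |v x - M.value c π x| ≤ M.γ * D := by
    intro x
    have e : v x - M.value c π x
        = ∑ a, π x a * (M.γ * ∑ x', M.P x a x' * (v x' - M.value c π x')) := by
      rw [hv x, M.value_bellman hπ c x, ← Finset.sum_sub_distrib]
      refine Finset.sum_congr rfl fun a _ => ?_
      rw [Finset.mul_sum, Finset.mul_sum, Finset.mul_sum]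
      rw [show ∀ s1 s2 : ℝ, π x a * ((1-M.γ) * c (x,a) + s1) - π x a * ((1-M.γ) * c (x,a) + s2)
        = π x a * (s1 - s2) from fun s1 s2 => by ring]
      rw [← Finset.sum_sub_distrib, Finset.mul_sum, Finset.mul_sum]
      refine Finset.sum_congr rfl fun x' _ => ?_
      ring
    rw [e]
    calc |∑ a, π x a * (M.γ * ∑ x', M.P x a x' * (v x' - M.value c π x'))|
        ≤ ∑ a, |π x a * (M.γ * ∑ x', M.P x a x' * (v x' - M.value c π x'))| :=
          Finset.abs_sum_le_sum_abs _ _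
      _ ≤ ∑ a, π x a * (M.γ * D) := by
          refine Finset.sum_le_sum fun a _ => ?_
          rw [abs_mul, abs_of_nonneg (hπ.1 x a), abs_mul, abs_of_pos M.γ_pos]
          refine mul_le_mul_of_nonneg_left
            (mul_le_mul_of_nonneg_left ?_ M.γ_pos.le) (hπ.1 x a)
          calc |∑ x', M.P x a x' * (v x' - M.value c π x')|
              ≤ ∑ x', |M.P x a x' * (v x' - M.value c π x')| := Finset.abs_sum_le_sum_abs _ _
            _ ≤ ∑ x', M.P x a x' * D := by
                refine Finset.sum_le_sum fun x' _ => ?_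
                rw [abs_mul, abs_of_nonneg (M.P_nonneg x a x')]
                exact mul_le_mul_of_nonneg_left (hDge x') (M.P_nonneg x a x')
            _ = D := by rw [← Finset.sum_mul, M.P_sum, one_mul]
      _ = M.γ * D := by rw [← Finset.sum_mul, hπ.2, one_mul]
  have hDle : D ≤ M.γ * D := by
    obtain ⟨x0, -, hx0⟩ := Finset.exists_mem_eq_sup' (Finset.univ_nonempty (α := X))
      (fun x => |v x - M.value c π x|)
    calc D = |v x0 - M.value c π x0| := by rw [hD, hx0]
      _ ≤ M.γ * D := key x0
  have hD0' : D ≤ 0 := by nlinarith [M.γ_lt_one]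
  funext x
  have := hDge x
  have habs : |v x - M.value c π x| ≤ 0 := le_trans this hD0'
  have := abs_nonneg (v x - M.value c π x)
  have : |v x - M.value c π x| = 0 := le_antisymm habs this
  have := abs_eq_zero.mp this
  linarith

/-- The greedy policy w.r.t. a fixed point of `Lop` achieves it. -/
lemma exists_opt_policy (c : X × A → ℝ) {u : X → ℝ} (hu : M.Lop c u = u) :
    ∃ πs, IsPolicy πs ∧ M.value c πs = u := by
  classical
  choose astar hastar using fun x =>
    Finset.exists_mem_eq_inf' (Finset.univ_nonempty (α := A))
      (fun a => (1 - M.γ) * c (x, a) + M.γ * ∑ x', M.P x a x' * u x')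
  set πs : X → A → ℝ := fun x a => if a = astar x then 1 else 0 with hπs
  have hpol : IsPolicy πs := by
    constructor
    · intro x a; rw [hπs]; dsimp only; split <;> norm_num
    · intro x; rw [hπs]; simp
  have hbell : ∀ x, u x = ∑ a, πs x a *
      ((1 - M.γ) * c (x, a) + M.γ * ∑ x', M.P x a x' * u x') := by
    intro x
    have h1 : ∑ a, πs x a * ((1 - M.γ) * c (x, a) + M.γ * ∑ x', M.P x a x' * u x')
        = (1 - M.γ) * c (x, astar x) + M.γ * ∑ x', M.P x (astar x) x' * u x' := by
      rw [hπs]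
      simp
    rw [h1, ← (hastar x).2]
    exact (congrFun hu x).symm
  exact ⟨πs, hpol, (M.bellman_unique hpol c u hbell).symm⟩

lemma fixed_feasible (c : X × A → ℝ) {u : X → ℝ} (hu : M.Lop c u = u) (p : X × A) :
    M.Tadj u p ≤ c p := by
  obtain ⟨x, a⟩ := p
  have h1 : u x ≤ (1 - M.γ) * c (x, a) + M.γ * ∑ x', M.P x a x' * u x' := by
    conv_lhs => rw [← hu]
    exact Finset.inf'_le _ (Finset.mem_univ a)
  unfold Tadj
  have hγ : (0:ℝ) < 1 - M.γ := by linarith [M.γ_lt_one]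
  rw [div_mul_eq_mul_div, one_mul, div_le_iff₀ hγ]
  simp only
  nlinarith

lemma fixed_le_value (hπ : IsPolicy π) (c : X × A → ℝ) {u : X → ℝ} (hu : M.Lop c u = u)
    (x : X) : u x ≤ M.value c π x :=
  M.le_value hπ (fun p => M.fixed_feasible c hu p) x

lemma Vstar_eq_fixed (c : X × A → ℝ) {u : X → ℝ} (hu : M.Lop c u = u) :
    M.Vstar c = u := by
  funext x
  obtain ⟨πs, hpol, hval⟩ := M.exists_opt_policy c hu
  have hmem : u x ∈ {v | ∃ π, IsPolicy π ∧ v = M.value c π x} :=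
    ⟨πs, hpol, by rw [hval]⟩
  have hlb : ∀ v ∈ {v | ∃ π, IsPolicy π ∧ v = M.value c π x}, u x ≤ v := by
    rintro v ⟨π', hπ', rfl⟩
    exact M.fixed_le_value hπ' c hu x
  exact le_antisymm (csInf_le ⟨u x, hlb⟩ hmem) (le_csInf ⟨u x, hmem⟩ hlb)


-- ## chunk 5

lemma occFrom_swap (hπ : IsPolicy π) (x : X) (a b : A) :
    M.occFrom ν' π (x, b) * π x a = M.occFrom ν' π (x, a) * π x b := by
  have hsa : ∀ t, M.saDist ν' π t (x, b) * π x a = M.saDist ν' π t (x, a) * π x b := by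
    intro t
    cases t with
    | zero =>
      show (ν' x * π x b) * π x a = (ν' x * π x a) * π x b
      ring
    | succ t =>
      show ((∑ q : X × A, M.saDist ν' π t q * M.P q.1 q.2 x) * π x b) * π x a
        = ((∑ q : X × A, M.saDist ν' π t q * M.P q.1 q.2 x) * π x a) * π x b
      ring
  unfold occFrom
  rw [mul_assoc, mul_assoc]
  congr 1
  rw [← tsum_mul_right, ← tsum_mul_right]
  refine tsum_congr fun t => ?_
  rw [mul_assoc, mul_assoc, hsa t]

lemma occFrom_prod (hπ : IsPolicy π) (x : X) (a : A) :
    M.occFrom ν' π (x, a) = (∑ b, M.occFrom ν' π (x, b)) * π x a := by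
  rw [Finset.sum_mul]
  rw [Finset.sum_congr rfl fun b _ => M.occFrom_swap hπ x a b]
  rw [← Finset.mul_sum, hπ.2, mul_one]

lemma marginal_unique {d d' : X → ℝ} (hπ : IsPolicy π)
    (hd : ∀ x, d x = (1 - M.γ) * M.ν x
      + M.γ * ∑ x', d x' * ∑ a, π x' a * M.P x' a x)
    (hd' : ∀ x, d' x = (1 - M.γ) * M.ν x
      + M.γ * ∑ x', d' x' * ∑ a, π x' a * M.P x' a x) :
    d = d' := by
  set Q : X → X → ℝ := fun x' x => ∑ a, π x' a * M.P x' a x with hQ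
  have hQ0 : ∀ x' x, 0 ≤ Q x' x := fun x' x =>
    Finset.sum_nonneg fun a _ => mul_nonneg (hπ.1 x' a) (M.P_nonneg x' a x)
  have hQ1 : ∀ x', ∑ x, Q x' x = 1 := by
    intro x'
    rw [hQ]
    simp only
    rw [Finset.sum_comm]
    simp only [← Finset.mul_sum, M.P_sum, mul_one]
    exact hπ.2 x'
  set e : X → ℝ := fun x => d x - d' x with he
  have hek : ∀ x, e x = M.γ * ∑ x', e x' * Q x' x := by
    intro x
    rw [he]
    simp only
    rw [hd x, hd' x]
    rw [Finset.mul_sum, Finset.mul_sum, Finset.mul_sum]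
    rw [show ∀ s1 s2 : ℝ, ((1-M.γ) * M.ν x + s1) - ((1-M.γ) * M.ν x + s2) = s1 - s2
      from fun _ _ => by ring]
    rw [← Finset.sum_sub_distrib]
    refine Finset.sum_congr rfl fun x' _ => ?_
    ring
  have hsum : ∑ x, |e x| ≤ M.γ * ∑ x, |e x| := by
    calc ∑ x, |e x| = ∑ x, |M.γ * ∑ x', e x' * Q x' x| := by
          exact Finset.sum_congr rfl fun x _ => by rw [hek x]
      _ ≤ ∑ x, M.γ * ∑ x', |e x'| * Q x' x := by
          refine Finset.sum_le_sum fun x _ => ?_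
          rw [abs_mul, abs_of_pos M.γ_pos]
          refine mul_le_mul_of_nonneg_left ?_ M.γ_pos.le
          calc |∑ x', e x' * Q x' x| ≤ ∑ x', |e x' * Q x' x| := Finset.abs_sum_le_sum_abs _ _
            _ ≤ ∑ x', |e x'| * Q x' x := by
                refine Finset.sum_le_sum fun x' _ => ?_
                rw [abs_mul, abs_of_nonneg (hQ0 x' x)]
      _ = M.γ * ∑ x, |e x| := by
          rw [← Finset.mul_sum]
          congr 1
          rw [Finset.sum_comm]
          exact Finset.sum_congr rfl fun x' _ => by rw [← Finset.mul_sum, hQ1 x', mul_one]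
  have h0 : ∑ x, |e x| = 0 := by
    have hnn : 0 ≤ ∑ x, |e x| := Finset.sum_nonneg fun x _ => abs_nonneg _
    nlinarith [M.γ_lt_one]
  funext x
  have := (Finset.sum_eq_zero_iff_of_nonneg (fun x _ => abs_nonneg (e x))).mp h0 x
    (Finset.mem_univ x)
  have := abs_eq_zero.mp this
  have : d x - d' x = 0 := this
  linarith

end FinMDP

lemma inducedPolicy_isPolicy {μ : X × A → ℝ} (hμ0 : ∀ p, 0 ≤ μ p) :
    FinMDP.IsPolicy (inducedPolicy μ) := by
  constructor
  · intro x a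
    unfold inducedPolicy
    split
    · positivity
    · rename_i h
      have hd : 0 ≤ ∑ a' : A, μ (x, a') := Finset.sum_nonneg fun a' _ => hμ0 _
      exact div_nonneg (hμ0 _) hd
  · intro x
    unfold inducedPolicy
    by_cases h : (∑ a' : A, μ (x, a')) = 0
    · simp only [h, if_true]
      rw [Finset.sum_const, nsmul_eq_mul]
      rw [Finset.card_univ]
      field_simp
    · simp only [h, if_false]
      rw [← Finset.sum_div]
      exact div_self h

lemma inducedPolicy_factor {μ : X × A → ℝ} (hμ0 : ∀ p, 0 ≤ μ p) (p : X × A) :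
    μ p = (∑ a' : A, μ (p.1, a')) * inducedPolicy μ p.1 p.2 := by
  unfold inducedPolicy
  by_cases h : (∑ a' : A, μ (p.1, a')) = 0
  · simp only [h, if_true, zero_mul]
    have := (Finset.sum_eq_zero_iff_of_nonneg (fun a' (_ : a' ∈ Finset.univ)
      => hμ0 (p.1, a'))).mp h p.2 (Finset.mem_univ p.2)
    rw [← this]
  · simp only [h, if_false]
    field_simp

namespace FinMDP
variable (M : FinMDP X A) {ν' : X → ℝ} {π : X → A → ℝ}

lemma occ_nonneg (hπ : IsPolicy π) (p : X × A) : 0 ≤ M.occ π p :=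
  M.occFrom_nonneg M.ν_nonneg hπ.1 p

lemma occ_flow (hπ : IsPolicy π) (x : X) :
    (∑ a, M.occ π (x, a)) - M.γ * ∑ p : X × A, M.occ π p * M.P p.1 p.2 x
      = (1 - M.γ) * M.ν x :=
  M.occFrom_flow M.ν_nonneg M.ν_sum hπ x

/-- Any nonnegative solution of the Bellman flow equation is the occupancy
measure of its induced policy. -/
lemma occ_of_flow {μ : X × A → ℝ} (hμ0 : ∀ p, 0 ≤ μ p)
    (hflow : ∀ x, (∑ a, μ (x, a)) - M.γ * ∑ p : X × A, μ p * M.P p.1 p.2 x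
      = (1 - M.γ) * M.ν x) :
    M.occ (inducedPolicy μ) = μ := by
  set π := inducedPolicy μ with hπdef
  have hπ : IsPolicy π := inducedPolicy_isPolicy hμ0
  set d : X → ℝ := fun x => ∑ a, μ (x, a) with hd
  set d' : X → ℝ := fun x => ∑ a, M.occ π (x, a) with hd'
  have hofac : ∀ p : X × A, M.occ π p = d' p.1 * π p.1 p.2 := by
    intro p
    show M.occFrom M.ν π p = _
    have := M.occFrom_prod (ν' := M.ν) hπ p.1 p.2
    exact this
  have hμfac : ∀ p : X × A, μ p = d p.1 * π p.1 p.2 := fun p => inducedPolicy_factor hμ0 p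
  have hme : ∀ (e : X → ℝ) (x : X),
      ∑ p : X × A, (e p.1 * π p.1 p.2) * M.P p.1 p.2 x
        = ∑ x', e x' * ∑ a, π x' a * M.P x' a x := by
    intro e x
    rw [Fintype.sum_prod_type]
    refine Finset.sum_congr rfl fun x' _ => ?_
    rw [Finset.mul_sum]
    refine Finset.sum_congr rfl fun a _ => ?_
    ring
  have hdeq : ∀ x, d x = (1 - M.γ) * M.ν x
      + M.γ * ∑ x', d x' * ∑ a, π x' a * M.P x' a x := by
    intro x
    have h1 := hflow x
    rw [Finset.sum_congr rfl fun p _ => congrArg (· * M.P p.1 p.2 x) (hμfac p), hme d x] at h1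
    linarith
  have hdeq' : ∀ x, d' x = (1 - M.γ) * M.ν x
      + M.γ * ∑ x', d' x' * ∑ a, π x' a * M.P x' a x := by
    intro x
    have h1 := M.occ_flow hπ x
    have h2 : ∑ p : X × A, M.occ π p * M.P p.1 p.2 x
        = ∑ x', d' x' * ∑ a, π x' a * M.P x' a x := by
      rw [Finset.sum_congr rfl fun p _ => congrArg (· * M.P p.1 p.2 x) (hofac p), hme d' x]
    rw [h2] at h1
    linarith
  have hdd : d = d' := M.marginal_unique hπ hdeq hdeq'
  funext p
  rw [hofac p, hμfac p, hdd]

end FinMDP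

section DualLemmas

open FinMDP

variable (M : FinMDP X A) {nc : ℕ}

lemma cost_costW (c : Fin nc → X × A → ℝ) (w : Fin nc → ℝ) (π : X → A → ℝ) :
    M.cost (costW c w) π = ∑ i, w i * M.cost (c i) π := by
  unfold cost costW
  rw [Finset.sum_congr rfl fun p (_ : p ∈ Finset.univ) => Finset.mul_sum _ _ (M.occ π p),
    Finset.sum_comm]
  refine Finset.sum_congr rfl fun i _ => ?_
  rw [Finset.mul_sum]
  refine Finset.sum_congr rfl fun p _ => ?_
  ring

lemma dualObj_eq (c : Fin nc → X × A → ℝ) {πE : X → A → ℝ} (hπE : IsPolicy πE)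
    (u : X → ℝ) (w : Fin nc → ℝ) :
    dualObj M c πE u w = (∑ x, M.ν x * u x) - M.cost (costW c w) πE := by
  unfold dualObj
  rw [Finset.sum_congr rfl fun p (_ : p ∈ Finset.univ) =>
    mul_sub (M.occ πE p) (M.Tadj u p) (costW c w p), Finset.sum_sub_distrib]
  congr 1
  exact M.occFrom_dot_Tadj M.ν_nonneg M.ν_sum hπE u

lemma simplex_dot_le_sup [NeZero nc] {w : Fin nc → ℝ} (hw : simplexPt w)
    (f : Fin nc → ℝ) :
    haveI : Nonempty (Fin nc) := ⟨⟨0, Nat.pos_of_ne_zero (NeZero.ne nc)⟩⟩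
    ∑ i, w i * f i ≤ Finset.univ.sup' Finset.univ_nonempty f := by
  haveI : Nonempty (Fin nc) := ⟨⟨0, Nat.pos_of_ne_zero (NeZero.ne nc)⟩⟩
  calc ∑ i, w i * f i ≤ ∑ i, w i * Finset.univ.sup' Finset.univ_nonempty f := by
        refine Finset.sum_le_sum fun i _ => ?_
        exact mul_le_mul_of_nonneg_left (Finset.le_sup' f (Finset.mem_univ i)) (hw.1 i)
    _ = Finset.univ.sup' Finset.univ_nonempty f := by
        rw [← Finset.sum_mul, hw.2, one_mul]

-- ## chunk 7: separation / minimax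

lemma exists_good_w [NeZero nc] (c : Fin nc → X × A → ℝ) (πE πA : X → A → ℝ)
    (hA : IsApprentice M c πE πA) :
    ∃ w : Fin nc → ℝ, simplexPt w ∧ ∀ π, IsPolicy π →
      gapMax M c πE πA ≤ ∑ i, w i * (M.cost (c i) π - M.cost (c i) πE) := by
  classical
  haveI : Nonempty (Fin nc) := ⟨⟨0, Nat.pos_of_ne_zero (NeZero.ne nc)⟩⟩
  set v : ℝ := gapMax M c πE πA with hv
  set O : Set (Fin nc → ℝ) := Set.univ.pi fun _ => Set.Iio v with hO
  have hOmem : ∀ z : Fin nc → ℝ, z ∈ O ↔ ∀ i, z i < v := by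
    intro z
    constructor
    · intro h i; exact h i (Set.mem_univ i)
    · intro h i _; exact h i
  set S : Set (Fin nc → ℝ) := {z | ∃ μ : X × A → ℝ, (∀ p, 0 ≤ μ p) ∧
    (∀ x, (∑ a, μ (x, a)) - M.γ * ∑ p : X × A, μ p * M.P p.1 p.2 x = (1 - M.γ) * M.ν x) ∧
    z = fun i => (∑ p : X × A, μ p * c i p) - M.cost (c i) πE} with hS
  have hOconv : Convex ℝ O := convex_pi fun _ _ => convex_Iio v
  have hOopen : IsOpen O := isOpen_set_pi Set.finite_univ fun _ _ => isOpen_Iio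
  have hSconv : Convex ℝ S := by
    rintro z1 ⟨μ1, h10, h1f, rfl⟩ z2 ⟨μ2, h20, h2f, rfl⟩ a b ha hb hab
    refine ⟨fun p => a * μ1 p + b * μ2 p, ?_, ?_, ?_⟩
    · intro p
      exact add_nonneg (mul_nonneg ha (h10 p)) (mul_nonneg hb (h20 p))
    · intro x
      have e1 : ∑ a', (a * μ1 (x, a') + b * μ2 (x, a'))
          = a * ∑ a', μ1 (x, a') + b * ∑ a', μ2 (x, a') := by
        rw [Finset.sum_add_distrib, ← Finset.mul_sum, ← Finset.mul_sum]
      have e2 : ∑ p : X × A, (a * μ1 p + b * μ2 p) * M.P p.1 p.2 x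
          = a * ∑ p : X × A, μ1 p * M.P p.1 p.2 x
            + b * ∑ p : X × A, μ2 p * M.P p.1 p.2 x := by
        rw [Finset.mul_sum, Finset.mul_sum, ← Finset.sum_add_distrib]
        refine Finset.sum_congr rfl fun p _ => ?_
        ring
      rw [e1, e2]
      have f1 := h1f x
      have f2 := h2f x
      linear_combination a * f1 + b * f2 + (1 - M.γ) * M.ν x * hab
    · funext i
      have e3 : ∑ p : X × A, (a * μ1 p + b * μ2 p) * c i p
          = a * ∑ p : X × A, μ1 p * c i p + b * ∑ p : X × A, μ2 p * c i p := by
        rw [Finset.mul_sum, Finset.mul_sum, ← Finset.sum_add_distrib]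
        refine Finset.sum_congr rfl fun p _ => ?_
        ring
      show a * _ + b * _ = _
      rw [e3]
      linear_combination (-(M.cost (c i) πE)) * hab
  have hSne : S.Nonempty := by
    refine ⟨fun i => (∑ p : X × A, M.occ πA p * c i p) - M.cost (c i) πE,
      M.occ πA, fun p => M.occ_nonneg hA.1 p, fun x => M.occ_flow hA.1 x, rfl⟩
  have hdisj : Disjoint O S := by
    rw [Set.disjoint_left]
    rintro z hzO ⟨μ, hμ0, hμf, rfl⟩
    have hocc := M.occ_of_flow hμ0 hμf
    have hpol : IsPolicy (inducedPolicy μ) := inducedPolicy_isPolicy hμ0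
    have hlt : gapMax M c πE (inducedPolicy μ) < v := by
      unfold gapMax
      rw [Finset.sup'_lt_iff]
      intro i _
      have : M.cost (c i) (inducedPolicy μ) = ∑ p : X × A, μ p * c i p := by
        unfold cost
        rw [hocc]
      rw [this]
      exact (hOmem _).mp hzO i
    exact absurd (hA.2 (inducedPolicy μ) hpol) (by linarith)
  obtain ⟨f, u, hfO, hfS⟩ := geometric_hahn_banach_open hOconv hOopen hSconv hdisj
  set w : Fin nc → ℝ := fun i => f (Pi.single i 1) with hw
  have hfz : ∀ z : Fin nc → ℝ, f z = ∑ i, z i * w i := by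
    intro z
    have hz : z = ∑ i, z i • (Pi.single i 1 : Fin nc → ℝ) := by
      funext j
      rw [Finset.sum_apply]
      have : ∀ i, (z i • (Pi.single i 1 : Fin nc → ℝ)) j = if j = i then z i else 0 := by
        intro i
        rw [Pi.smul_apply, Pi.single_apply, smul_eq_mul]
        split <;> simp
      rw [Finset.sum_congr rfl fun i _ => this i]
      simp
    conv_lhs => rw [hz]
    rw [map_sum]
    refine Finset.sum_congr rfl fun i _ => ?_
    rw [map_smul, smul_eq_mul, hw]
  -- w is nonnegative
  have hw0 : ∀ j, 0 ≤ w j := by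
    intro j
    by_contra hneg
    push_neg at hneg
    set s0 : ℝ := ∑ i, (v - 1) * w i with hs0
    set t : ℝ := max 0 ((u - s0) / (-w j)) + 1 with ht
    have htpos : 0 < t := by positivity
    have htge : (u - s0) / (-w j) ≤ t := by
      rw [ht]
      have := le_max_right (0:ℝ) ((u - s0) / (-w j))
      linarith
    set z : Fin nc → ℝ := fun i => (v - 1) - (if i = j then t else 0) with hz
    have hzO : z ∈ O := by
      rw [hOmem]
      intro i
      rw [hz]
      simp only
      split
      · linarith
      · linarith
    have hfzval : f z = s0 - t * w j := by
      rw [hfz z]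
      have hterm : ∀ i, z i * w i = (v - 1) * w i - (if i = j then t * w i else 0) := by
        intro i
        show ((v - 1) - (if i = j then t else 0)) * w i = _
        split <;> ring
      rw [Finset.sum_congr rfl fun i _ => hterm i, Finset.sum_sub_distrib,
        Finset.sum_ite_eq' Finset.univ j fun i => t * w i, hs0]
      simp
    have hlt := hfO z hzO
    rw [hfzval] at hlt
    have : u - s0 ≤ t * (-w j) := by
      rw [div_le_iff₀ (by linarith : (0:ℝ) < -w j)] at htge
      linarith
    linarith
  -- sum of w is positive
  have hWpos : 0 < ∑ i, w i := by
    rcases lt_or_ge 0 (∑ i, w i) with h | h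
    · exact h
    · exfalso
      have hall : ∀ i, w i = 0 := by
        have h0 : ∑ i, w i = 0 :=
          le_antisymm h (Finset.sum_nonneg fun i _ => hw0 i)
        intro i
        exact (Finset.sum_eq_zero_iff_of_nonneg fun i _ => hw0 i).mp h0 i (Finset.mem_univ i)
      obtain ⟨s, hs⟩ := hSne
      have h1 : f s = 0 := by
        rw [hfz s]
        simp [hall]
      have h2 : (fun _ => v - 1 : Fin nc → ℝ) ∈ O := by
        rw [hOmem]; intro i; norm_num
      have h3 := hfO _ h2
      have h4 : f (fun _ => v - 1 : Fin nc → ℝ) = 0 := by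
        rw [hfz]
        simp [hall]
      have h5 := hfS s hs
      rw [h4] at h3
      rw [h1] at h5
      linarith
  -- v * W ≤ u
  have hvW : v * (∑ i, w i) ≤ u := by
    by_contra hcon
    push_neg at hcon
    set W : ℝ := ∑ i, w i
    set ε : ℝ := (v * W - u) / W with hε
    have hεpos : 0 < ε := div_pos (by linarith) hWpos
    have hmem : (fun _ => v - ε : Fin nc → ℝ) ∈ O := by
      rw [hOmem]; intro i; linarith
    have := hfO _ hmem
    rw [hfz] at this
    have he : ∑ i, (v - ε) * w i = (v - ε) * W := by rw [← Finset.mul_sum]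
    rw [he] at this
    have heq : (v - ε) * W = u := by
      rw [hε]
      field_simp
      ring
    linarith
  -- conclusion
  refine ⟨fun i => w i / ∑ j, w j, ⟨fun i => div_nonneg (hw0 i) (Finset.sum_nonneg
    fun j _ => hw0 j), by rw [← Finset.sum_div, div_self (ne_of_gt hWpos)]⟩, ?_⟩
  intro π hπ
  have hmemS : (fun i => (∑ p : X × A, M.occ π p * c i p) - M.cost (c i) πE) ∈ S :=
    ⟨M.occ π, fun p => M.occ_nonneg hπ p, fun x => M.occ_flow hπ x, rfl⟩
  have hb := hfS _ hmemS
  rw [hfz] at hb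
  have hb' : u ≤ ∑ i, (M.cost (c i) π - M.cost (c i) πE) * w i := hb
  set W : ℝ := ∑ j, w j with hW
  have hW0 : W ≠ 0 := ne_of_gt hWpos
  have hsplit : ∑ i, (w i / W) * (M.cost (c i) π - M.cost (c i) πE)
      = (1 / W) * ∑ i, (M.cost (c i) π - M.cost (c i) πE) * w i := by
    rw [Finset.mul_sum]
    refine Finset.sum_congr rfl fun i _ => ?_
    field_simp
  rw [hsplit]
  have hup : v * W ≤ ∑ i, (M.cost (c i) π - M.cost (c i) πE) * w i := le_trans hvW hb'
  calc v = (1 / W) * (v * W) := by field_simp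
    _ ≤ (1 / W) * ∑ i, (M.cost (c i) π - M.cost (c i) πE) * w i :=
        mul_le_mul_of_nonneg_left hup (by positivity)

end DualLemmas

/-- (Suboptimal expert.) If `(u_A, w_A)` is optimal for the dual LP of
the LfD problem, then any apprentice policy `π_A` is optimal for the forward RL
problem with cost `c_{w_A}`, and `u_A = V*_{w_A}` (here `ν₀` has full support). -/
theorem dual_optimality_suboptimal_expert (M : FinMDP X A) {nc : ℕ} [NeZero nc]
    (hν : ∀ x, 0 < M.ν x)
    (c : Fin nc → X × A → ℝ)
    (πE : X → A → ℝ) (hπE : FinMDP.IsPolicy πE)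
    (uA : X → ℝ) (wA : Fin nc → ℝ)
    (hdual : dualOptimal M c πE uA wA)
    (πA : X → A → ℝ) (hA : IsApprentice M c πE πA) :
    M.IsOptimal (costW c wA) πA ∧ uA = M.Vstar (costW c wA) := by
  classical
  haveI : Nonempty (Fin nc) := ⟨⟨0, Nat.pos_of_ne_zero (NeZero.ne nc)⟩⟩
  set cA : X × A → ℝ := costW c wA with hcA
  obtain ⟨uS, huS⟩ := M.exists_fixed cA
  obtain ⟨πS, hπS, hvalS⟩ := M.exists_opt_policy cA huS
  -- uA ≤ uS pointwise
  have hfeasA : ∀ p, M.Tadj uA p ≤ cA p := fun p => by linarith [hdual.1.2 p]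
  have hle : ∀ x, uA x ≤ uS x := by
    intro x
    have := M.le_value hπS hfeasA x
    rw [hvalS] at this
    exact this
  -- optimality of the dual forces equality
  have hfeasS : dualFeasible M c uS wA :=
    ⟨hdual.1.1, fun p => by linarith [M.fixed_feasible cA huS p]⟩
  have hobj := hdual.2 uS wA hfeasS
  rw [dualObj_eq M c hπE uS wA, dualObj_eq M c hπE uA wA] at hobj
  have hsumle : ∑ x, M.ν x * (uS x - uA x) ≤ 0 := by
    have : ∑ x, M.ν x * (uS x - uA x) = (∑ x, M.ν x * uS x) - ∑ x, M.ν x * uA x := by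
      rw [← Finset.sum_sub_distrib]
      exact Finset.sum_congr rfl fun x _ => by ring
    rw [this]
    linarith
  have huAuS : uA = uS := by
    have h0 : ∑ x, M.ν x * (uS x - uA x) = 0 :=
      le_antisymm hsumle (Finset.sum_nonneg fun x _ =>
        mul_nonneg (hν x).le (by linarith [hle x]))
    funext x
    have := (Finset.sum_eq_zero_iff_of_nonneg fun x _ =>
      mul_nonneg (hν x).le (by linarith [hle x] : (0:ℝ) ≤ uS x - uA x)).mp h0 x
      (Finset.mem_univ x)
    have hνx := hν x
    have : uS x - uA x = 0 := by
      rcases mul_eq_zero.mp this with h | h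
      · exact absurd h (ne_of_gt hνx)
      · exact h
    linarith
  have hVstar : uA = M.Vstar cA := by
    rw [huAuS, M.Vstar_eq_fixed cA huS]
  -- the minimax bound
  obtain ⟨w', hw', hbound⟩ := exists_good_w M c πE πA hA
  set cW : X × A → ℝ := costW c w' with hcW
  obtain ⟨uS', huS'⟩ := M.exists_fixed cW
  obtain ⟨πS', hπS', hvalS'⟩ := M.exists_opt_policy cW huS'
  have hfeas' : dualFeasible M c uS' w' :=
    ⟨hw', fun p => by linarith [M.fixed_feasible cW huS' p]⟩
  have hobj' := hdual.2 uS' w' hfeas'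
  rw [dualObj_eq M c hπE uS' w', dualObj_eq M c hπE uA wA] at hobj'
  -- cost of πS' equals ∑ ν uS'
  have hcost_eq : ∀ (cc : X × A → ℝ) (πo : X → A → ℝ) (ho : FinMDP.IsPolicy πo)
      (uo : X → ℝ) (hval : M.value cc πo = uo),
      M.cost cc πo = ∑ x, M.ν x * uo x := by
    intro cc πo ho uo hval
    rw [M.cost_eq ho cc]
    exact Finset.sum_congr rfl fun x _ => by rw [hval]
  have hcS' : M.cost cW πS' = ∑ x, M.ν x * uS' x := hcost_eq cW πS' hπS' uS' hvalS'
  have hcS : M.cost cA πS = ∑ x, M.ν x * uS x := hcost_eq cA πS hπS uS hvalS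
  -- gapMax πA ≤ dualObj(uS', w')
  have hgap1 : gapMax M c πE πA ≤ (∑ x, M.ν x * uS' x) - M.cost cW πE := by
    have h1 := hbound πS' hπS'
    have h2 : ∑ i, w' i * (M.cost (c i) πS' - M.cost (c i) πE)
        = M.cost cW πS' - M.cost cW πE := by
      rw [hcW, cost_costW, cost_costW, ← Finset.sum_sub_distrib]
      exact Finset.sum_congr rfl fun i _ => by ring
    rw [h2, hcS'] at h1
    exact h1
  -- chain: gapMax πA ≤ ∑ ν uA - cost cA πE  = cost cA πS - cost cA πE
  have hchain : gapMax M c πE πA ≤ M.cost cA πS - M.cost cA πE := by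
    have e1 : (∑ x, M.ν x * uA x) = M.cost cA πS := by
      rw [huAuS, hcS]
    linarith
  -- cost cA πA - cost cA πE ≤ gapMax πA
  have hconv : M.cost cA πA - M.cost cA πE ≤ gapMax M c πE πA := by
    have h1 : M.cost cA πA - M.cost cA πE
        = ∑ i, wA i * (M.cost (c i) πA - M.cost (c i) πE) := by
      rw [hcA, cost_costW, cost_costW, ← Finset.sum_sub_distrib]
      exact Finset.sum_congr rfl fun i _ => by ring
    rw [h1]
    exact simplex_dot_le_sup hdual.1.1 fun i => M.cost (c i) πA - M.cost (c i) πE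
  -- πS is optimal and cost πA ≤ cost πS
  have hSopt : ∀ π', FinMDP.IsPolicy π' → M.cost cA πS ≤ M.cost cA π' := by
    intro π' hπ'
    rw [hcS, M.cost_eq hπ' cA]
    exact Finset.sum_le_sum fun x _ =>
      mul_le_mul_of_nonneg_left (M.fixed_le_value hπ' cA huS x) (M.ν_nonneg x)
  have hAle : M.cost cA πA ≤ M.cost cA πS := by linarith
  exact ⟨⟨hA.1, fun π' hπ' => le_trans hAle (hSopt π' hπ')⟩, hVstar⟩
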